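/- Let u : I → ℝ be a C^∞ function on an open interval I with u(x) > 0 and u(x)² + x² > 0 on I, satisfying the ODE u''' = 3(u u'' + (u')² + 1)² / (u (u u' + x)) − 3 u' u'' / u + 8 x (u u' + x)⁴ (u² + x² + 1) / (u (u² + x²)), with u(x) u'(x) + x ≠ 0 on I. Suppose the function s(x) = x² + u(x)² is strictly monotone on I with C^∞ inverse g defined on J = s(I), and that 0 ∉ J. Then g satisfies the linear ODE g'''(t) = −((t + 1)/t) · g(t) on J. -/

import Mathlib

private lemma iter3_eq (f : ℝ → ℝ) (s : Set ℝ) (hs : UniqueDiffOn ℝ s) {x : ℝ} (hx : x ∈ s) :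
    iteratedDerivWithin 3 f s x =
      derivWithin (derivWithin (derivWithin f s) s) s x := by
  rw [show (3 : ℕ) = 2 + 1 from rfl, iteratedDerivWithin_succ',
    show (2 : ℕ) = 1 + 1 from rfl, iteratedDerivWithin_succ',
    show (1 : ℕ) = 0 + 1 from rfl, iteratedDerivWithin_succ', iteratedDerivWithin_zero]

private lemma iter2_eq (f : ℝ → ℝ) (s : Set ℝ) (hs : UniqueDiffOn ℝ s) {x : ℝ} (hx : x ∈ s) :
    iteratedDerivWithin 2 f s x = derivWithin (derivWithin f s) s x := by
  rw [show (2 : ℕ) = 1 + 1 from rfl, iteratedDerivWithin_succ',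
    show (1 : ℕ) = 0 + 1 from rfl, iteratedDerivWithin_succ', iteratedDerivWithin_zero]

/-- The point transformation `x̂ = x² + u²`, `û = x` maps the nonlinear third-order ODE
`u''' = 3(u u'' + (u')² + 1)²/(u(u u' + x)) − 3 u' u''/u
       + 8x(u u' + x)⁴(u² + x² + 1)/(u(u² + x²))`
to the linear ODE `g''' = −((t+1)/t)·g`: if `g` is the smooth inverse of
`s(x) = x² + u(x)²` then `g` solves the linear target equation on `J = s(I)`. -/
theorem ode3_linearization (a b : ℝ) (u : ℝ → ℝ)
    (hu : ContDiffOn ℝ (⊤ : ℕ∞) u (Set.Ioo a b))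
    (hupos : ∀ x ∈ Set.Ioo a b, 0 < u x)
    (hsum : ∀ x ∈ Set.Ioo a b, 0 < (u x) ^ 2 + x ^ 2)
    (hne : ∀ x ∈ Set.Ioo a b, u x * derivWithin u (Set.Ioo a b) x + x ≠ 0)
    (hode : ∀ x ∈ Set.Ioo a b,
      iteratedDerivWithin 3 u (Set.Ioo a b) x =
        3 * (u x * iteratedDerivWithin 2 u (Set.Ioo a b) x
              + (derivWithin u (Set.Ioo a b) x) ^ 2 + 1) ^ 2 /
            (u x * (u x * derivWithin u (Set.Ioo a b) x + x))
          - 3 * derivWithin u (Set.Ioo a b) x * iteratedDerivWithin 2 u (Set.Ioo a b) x / u x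
          + 8 * x * (u x * derivWithin u (Set.Ioo a b) x + x) ^ 4 *
              ((u x) ^ 2 + x ^ 2 + 1) / (u x * ((u x) ^ 2 + x ^ 2)))
    (g : ℝ → ℝ)
    (hmono : StrictMonoOn (fun x => x ^ 2 + (u x) ^ 2) (Set.Ioo a b) ∨
      StrictAntiOn (fun x => x ^ 2 + (u x) ^ 2) (Set.Ioo a b))
    (hg : ContDiffOn ℝ (⊤ : ℕ∞) g ((fun x => x ^ 2 + (u x) ^ 2) '' Set.Ioo a b))
    (hgi : ∀ x ∈ Set.Ioo a b, g (x ^ 2 + (u x) ^ 2) = x)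
    (h0 : (0 : ℝ) ∉ (fun x => x ^ 2 + (u x) ^ 2) '' Set.Ioo a b) :
    ∀ t ∈ (fun x => x ^ 2 + (u x) ^ 2) '' Set.Ioo a b,
      iteratedDerivWithin 3 g ((fun x => x ^ 2 + (u x) ^ 2) '' Set.Ioo a b) t =
        -((t + 1) / t) * g t := by
  rintro t ⟨x, hx, rfl⟩
  set I : Set ℝ := Set.Ioo a b with hIdef
  set S : ℝ → ℝ := fun x => x ^ 2 + (u x) ^ 2 with hSdef
  set J : Set ℝ := S '' I with hJdef
  have hIu : UniqueDiffOn ℝ I := isOpen_Ioo.uniqueDiffOn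
  -- derivatives of u
  set u1 : ℝ → ℝ := derivWithin u I with hu1def
  set u2 : ℝ → ℝ := derivWithin u1 I with hu2def
  set u3 : ℝ → ℝ := derivWithin u2 I with hu3def
  have hcu1 : ContDiffOn ℝ (⊤ : ℕ∞) u1 I := hu.derivWithin hIu (by exact_mod_cast le_top)
  have hcu2 : ContDiffOn ℝ (⊤ : ℕ∞) u2 I := hcu1.derivWithin hIu (by exact_mod_cast le_top)
  have hud : ∀ y ∈ I, HasDerivWithinAt u (u1 y) I y := fun y hy =>
    ((hu.differentiableOn (by simp)) y hy).hasDerivWithinAt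
  have hu1d : ∀ y ∈ I, HasDerivWithinAt u1 (u2 y) I y := fun y hy =>
    ((hcu1.differentiableOn (by simp)) y hy).hasDerivWithinAt
  have hu2d : ∀ y ∈ I, HasDerivWithinAt u2 (u3 y) I y := fun y hy =>
    ((hcu2.differentiableOn (by simp)) y hy).hasDerivWithinAt
  -- P, Q, R
  set P : ℝ → ℝ := fun y => u y * u1 y + y with hPdef
  set Q : ℝ → ℝ := fun y => u y * u2 y + (u1 y) ^ 2 + 1 with hQdef
  set R : ℝ → ℝ := fun y => u y * u3 y + 3 * u1 y * u2 y with hRdef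
  have hP0 : ∀ y ∈ I, P y ≠ 0 := fun y hy => hne y hy
  have h2P0 : ∀ y ∈ I, 2 * P y ≠ 0 := fun y hy => by
    have := hP0 y hy; positivity
  have hSd : ∀ y ∈ I, HasDerivWithinAt S (2 * P y) I y := by
    intro y hy
    have h1 : HasDerivWithinAt (fun z : ℝ => z ^ 2) (2 * y) I y := by
      simpa using (hasDerivAt_pow 2 y).hasDerivWithinAt
    have h2 : HasDerivWithinAt (fun z => (u z) ^ 2) (2 * u y ^ 1 * u1 y) I y :=
      (hud y hy).pow 2
    have := h1.fun_add h2
    refine this.congr_deriv ?_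
    show _ = 2 * (u y * u1 y + y); ring
  have hPd : ∀ y ∈ I, HasDerivWithinAt P (Q y) I y := by
    intro y hy
    have := ((hud y hy).fun_mul (hu1d y hy)).fun_add (hasDerivWithinAt_id y I)
    refine this.congr_deriv ?_
    show _ = u y * u2 y + u1 y ^ 2 + 1; ring
  have hQd : ∀ y ∈ I, HasDerivWithinAt Q (R y) I y := by
    intro y hy
    have := (((hud y hy).fun_mul (hu2d y hy)).fun_add ((hu1d y hy).fun_pow 2)).add_const 1
    refine this.congr_deriv ?_
    show _ = u y * u3 y + 3 * u1 y * u2 y; ring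
  -- J is convex with nonempty interior, hence UniqueDiffOn
  have hScont : ContinuousOn S I := ((continuousOn_id.pow 2).add (hu.continuousOn.pow 2))
  have hJconv : Convex ℝ J := ((convex_Ioo a b).isPreconnected.image S hScont).convex
  have hJint : (interior J).Nonempty := by
    obtain ⟨hax, hxb⟩ := hx
    have hx1 : (a + x) / 2 ∈ I := ⟨by linarith, by linarith⟩
    have hx2 : (x + b) / 2 ∈ I := ⟨by linarith, by linarith⟩
    have hlt : (a + x) / 2 < (x + b) / 2 := by linarith
    have hneq : S ((a + x) / 2) ≠ S ((x + b) / 2) := by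
      rcases hmono with h | h
      · exact ne_of_lt (h hx1 hx2 hlt)
      · exact ne_of_gt (h hx1 hx2 hlt)
    set c := min (S ((a + x) / 2)) (S ((x + b) / 2)) with hc
    set d := max (S ((a + x) / 2)) (S ((x + b) / 2)) with hd
    have hcd : c < d := min_lt_max.mpr hneq
    have hcJ : c ∈ J := by
      rcases min_cases (S ((a + x) / 2)) (S ((x + b) / 2)) with ⟨h, _⟩ | ⟨h, _⟩ <;>
        rw [hc, h]
      · exact ⟨_, hx1, rfl⟩
      · exact ⟨_, hx2, rfl⟩
    have hdJ : d ∈ J := by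
      rcases max_cases (S ((a + x) / 2)) (S ((x + b) / 2)) with ⟨h, _⟩ | ⟨h, _⟩ <;>
        rw [hd, h]
      · exact ⟨_, hx1, rfl⟩
      · exact ⟨_, hx2, rfl⟩
    have hIcc : Set.Icc c d ⊆ J := hJconv.ordConnected.out hcJ hdJ
    have : Set.Ioo c d ⊆ interior J := by
      rw [← interior_Icc]; exact interior_mono hIcc
    exact ⟨(c + d) / 2, this ⟨by linarith, by linarith⟩⟩
  have hJu : UniqueDiffOn ℝ J := uniqueDiffOn_convex hJconv hJint
  -- derivatives of g
  set G1 : ℝ → ℝ := derivWithin g J with hG1def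
  set G2 : ℝ → ℝ := derivWithin G1 J with hG2def
  set G3 : ℝ → ℝ := derivWithin G2 J with hG3def
  have hcg1 : ContDiffOn ℝ (⊤ : ℕ∞) G1 J := hg.derivWithin hJu (by exact_mod_cast le_top)
  have hcg2 : ContDiffOn ℝ (⊤ : ℕ∞) G2 J := hcg1.derivWithin hJu (by exact_mod_cast le_top)
  have hgd : ∀ s ∈ J, HasDerivWithinAt g (G1 s) J s := fun s hs =>
    ((hg.differentiableOn (by simp)) s hs).hasDerivWithinAt
  have hg1d : ∀ s ∈ J, HasDerivWithinAt G1 (G2 s) J s := fun s hs =>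
    ((hcg1.differentiableOn (by simp)) s hs).hasDerivWithinAt
  have hg2d : ∀ s ∈ J, HasDerivWithinAt G2 (G3 s) J s := fun s hs =>
    ((hcg2.differentiableOn (by simp)) s hs).hasDerivWithinAt
  have hmaps : Set.MapsTo S I J := fun y hy => ⟨y, hy, rfl⟩
  have hSJ : ∀ y ∈ I, S y ∈ J := fun y hy => ⟨y, hy, rfl⟩
  -- step A : G1 (S y) * (2 P y) = 1
  have hA : ∀ y ∈ I, G1 (S y) * (2 * P y) = 1 := by
    intro y hy
    have hcomp : HasDerivWithinAt (g ∘ S) (G1 (S y) * (2 * P y)) I y :=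
      (hgd (S y) (hSJ y hy)).comp y (hSd y hy) hmaps
    have hid : HasDerivWithinAt (g ∘ S) 1 I y :=
      (hasDerivWithinAt_id y I).congr (fun z hz => hgi z hz) (hgi y hy)
    have e1 := hcomp.derivWithin (hIu y hy)
    have e2 := hid.derivWithin (hIu y hy)
    rw [← e1]; exact e2
  have hA' : ∀ y ∈ I, G1 (S y) = (2 * P y)⁻¹ := fun y hy =>
    eq_inv_of_mul_eq_one_left (hA y hy)
  -- step B : G2 (S y) = -(2 Q y) / (2 P y)^3
  have hB : ∀ y ∈ I, G2 (S y) = -(2 * Q y) / (2 * P y) ^ 3 := by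
    intro y hy
    have hF : HasDerivWithinAt (fun z => G1 (S z)) (G2 (S y) * (2 * P y)) I y :=
      (hg1d (S y) (hSJ y hy)).comp y (hSd y hy) hmaps
    have h2Pd : HasDerivWithinAt (fun z => 2 * P z) (2 * Q y) I y :=
      (hPd y hy).const_mul 2
    have hinv : HasDerivWithinAt (fun z => (2 * P z)⁻¹)
        (-(2 * Q y) / (2 * P y) ^ 2) I y := h2Pd.inv (h2P0 y hy)
    have hF' : HasDerivWithinAt (fun z => G1 (S z)) (-(2 * Q y) / (2 * P y) ^ 2) I y :=
      hinv.congr (fun z hz => hA' z hz) (hA' y hy)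
    have e1 := hF.derivWithin (hIu y hy)
    have e2 := hF'.derivWithin (hIu y hy)
    have e3 : G2 (S y) * (2 * P y) = -(2 * Q y) / (2 * P y) ^ 2 := by rw [← e1]; exact e2
    have h2p := h2P0 y hy
    rw [eq_div_iff (pow_ne_zero 2 h2p)] at e3
    rw [eq_div_iff (pow_ne_zero 3 h2p)]
    linear_combination e3
  -- step C at x : G3 (S x) * (2 P x)
  have hC : G3 (S x) * (2 * P x) =
      (-(2 * R x) * (2 * P x) ^ 3 - -(2 * Q x) * ((3 : ℕ) * (2 * P x) ^ 2 * (2 * Q x))) /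
        ((2 * P x) ^ 3) ^ 2 := by
    have hF : HasDerivWithinAt (fun z => G2 (S z)) (G3 (S x) * (2 * P x)) I x :=
      (hg2d (S x) (hSJ x hx)).comp x (hSd x hx) hmaps
    have h2Qd : HasDerivWithinAt (fun z => -(2 * Q z)) (-(2 * R x)) I x :=
      (((hQd x hx).const_mul 2)).neg
    have h2P3d : HasDerivWithinAt (fun z => (2 * P z) ^ 3)
        ((3 : ℕ) * (2 * P x) ^ 2 * (2 * Q x)) I x := by
      have := ((hPd x hx).const_mul 2).fun_pow 3
      convert this using 1
    have hdiv : HasDerivWithinAt (fun z => -(2 * Q z) / (2 * P z) ^ 3)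
        ((-(2 * R x) * (2 * P x) ^ 3 - -(2 * Q x) * ((3 : ℕ) * (2 * P x) ^ 2 * (2 * Q x))) /
          ((2 * P x) ^ 3) ^ 2) I x :=
      h2Qd.div h2P3d (pow_ne_zero 3 (h2P0 x hx))
    have hF' : HasDerivWithinAt (fun z => G2 (S z))
        ((-(2 * R x) * (2 * P x) ^ 3 - -(2 * Q x) * ((3 : ℕ) * (2 * P x) ^ 2 * (2 * Q x))) /
          ((2 * P x) ^ 3) ^ 2) I x :=
      hdiv.congr (fun z hz => hB z hz) (hB x hx)
    have e1 := hF.derivWithin (hIu x hx)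
    have e2 := hF'.derivWithin (hIu x hx)
    rw [← e1]; exact e2
  -- nonvanishing facts at x
  have hu0 : u x ≠ 0 := ne_of_gt (hupos x hx)
  have hp0 : P x ≠ 0 := hP0 x hx
  have hS0 : S x ≠ 0 := fun h => h0 (h ▸ hSJ x hx)
  -- rewrite the ODE at x
  have hode' : u3 x = 3 * Q x ^ 2 / (u x * P x) - 3 * u1 x * u2 x / u x
      + 8 * x * P x ^ 4 * (S x + 1) / (u x * S x) := by
    have h := hode x hx
    rw [iter3_eq u I hIu hx, iter2_eq u I hIu hx,
      show derivWithin u I = u1 from rfl, show derivWithin u1 I = u2 from rfl,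
      show derivWithin u2 I = u3 from rfl] at h
    rw [h]
    have hSe : (u x) ^ 2 + x ^ 2 = S x := by show _ = x ^ 2 + u x ^ 2; ring
    rw [hSe]
  -- key polynomial identity : 3 q² - r p = -8 x p⁵ (s+1)/s
  have hkey : (3 * Q x ^ 2 - R x * P x) * S x = -(8 * x * P x ^ 5 * (S x + 1)) := by
    have hR : R x = u x * u3 x + 3 * u1 x * u2 x := rfl
    rw [hR, hode']
    field_simp
    ring
  -- conclude
  rw [iter3_eq g J hJu (hSJ x hx)]
  show G3 (S x) = -((S x + 1) / S x) * g (S x)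
  rw [hgi x hx]
  have h2p : (2 * P x) ≠ 0 := h2P0 x hx
  rw [eq_div_iff (pow_ne_zero 2 (pow_ne_zero 3 h2p))] at hC
  push_cast at hC
  have h128 : (128 : ℝ) * P x ^ 7 ≠ 0 := mul_ne_zero (by norm_num) (pow_ne_zero 7 hp0)
  have hmain : G3 (S x) * S x = -(S x + 1) * x := by
    apply mul_right_cancel₀ h128
    linear_combination (S x) * hC + (16 * P x ^ 2) * hkey
  field_simp
  linear_combination hmain
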